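/- The q-multinomial identity qbinom3(l; l-n, l-n, 2n-l) − q · qbinom3(l; l-n-1, l-n+1, 2n-l) = (1/[l-n+1]_q) · qbinom(2(l-n), l-n) · qbinom(l, 2n-l) holds for n ≤ l ≤ 2n, where qbinom3(l; a, b, c) = [l]_q!/([a]_q![b]_q![c]_q!) for a+b+c = l. -/

import Mathlib

inductive Step : Type
  | E | D | N
deriving DecidableEq

instance instFintypeStep : Fintype Step :=
  ⟨{Step.E, Step.D, Step.N}, fun x => by cases x <;> simp⟩

open Step Polynomial

/-- All words of length `l` over the step alphabet. -/
def Words (l : ℕ) : Finset (List Step) :=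
  (Finset.univ : Finset (Fin l → Step)).image List.ofFn

/-- Delannoy paths from (0,0) to (m,n) with `l` steps, encoded as words:
`#E + #D = m`, `#N + #D = n`, length `l`. -/
def DelSet (m n l : ℕ) : Finset (List Step) :=
  (Words l).filter fun w => w.count E + w.count D = m ∧ w.count N + w.count D = n

/-- A word is bad if some prefix contains more N's than E's. -/
def bad (w : List Step) : Bool :=
  (List.range (w.length + 1)).any fun k => (w.take k).count E < (w.take k).count N

/-- Bad Delannoy paths from (0,0) to (n,n) with `l` steps. -/
def BDelSet (n l : ℕ) : Finset (List Step) :=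
  (DelSet n n l).filter fun w => bad w

/-- Schröder paths: Delannoy paths to (n,n) never going above the diagonal. -/
def SchSet (n l : ℕ) : Finset (List Step) :=
  (DelSet n n l).filter fun w => ¬ bad w

/-- Major index of a word w_1 ⋯ w_l with respect to a ranking of the letters:
the sum of all positions i (1 ≤ i ≤ l-1) with w_i > w_{i+1}. -/
def maj (rank : Step → ℕ) (w : List Step) : ℕ :=
  ∑ i ∈ Finset.range (w.length - 1),
    if rank (w.getD (i + 1) E) < rank (w.getD i E) then i + 1 else 0

/-- q-integer [m] = 1 + q + ⋯ + q^{m-1}. -/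
noncomputable def qint (m : ℕ) : Polynomial ℚ :=
  ∑ i ∈ Finset.range m, X ^ i

/-- q-factorial. -/
noncomputable def qfact : ℕ → Polynomial ℚ
  | 0 => 1
  | m + 1 => qfact m * qint (m + 1)

/-- Gaussian binomial coefficient, via the q-Pascal recurrence. -/
noncomputable def qbinom : ℕ → ℕ → Polynomial ℚ
  | _, 0 => 1
  | 0, _ + 1 => 0
  | m + 1, k + 1 => qbinom m k + X ^ (k + 1) * qbinom m (k + 1)

/-- q-trinomial coefficient [l]!/([a]![b]![c]!), defined when a+b+c = l. -/
noncomputable def qbinom3 (l a b c : ℕ) : Polynomial ℚ :=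
  if a + b + c = l then qbinom l a * qbinom (l - a) b else 0

/-- Depth after the first `i` steps: #N − #E. -/
def depth (w : List Step) (i : ℕ) : ℤ :=
  ((w.take i).count N : ℤ) - (w.take i).count E

/-- `k` (0 ≤ k ≤ l) achieves the maximal running depth. -/
def isMaxDepth (w : List Step) (k : ℕ) : Bool :=
  (List.range (w.length + 1)).all fun i => decide (depth w i ≤ depth w k)

/-- The first index (number of steps) at which the running depth is maximal. -/
def firstDeep (w : List Step) : ℕ :=
  (List.range (w.length + 1)).findIdx (isMaxDepth w)

/-- The last index at which the running depth is maximal. -/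
def lastDeep (w : List Step) : ℕ :=
  w.length - (List.range (w.length + 1)).reverse.findIdx (isMaxDepth w)

/-- Replace the first deepest step (the step w_k, k = firstDeep) with E. -/
def phi (w : List Step) : List Step := w.set (firstDeep w - 1) E

/-- Replace the step following the last deepest point with N. -/
def phiInv (w : List Step) : List Step := w.set (lastDeep w) N

/-- Number of consecutive D's immediately after the first deepest step. -/
def runS (w : List Step) : ℕ := ((w.drop (firstDeep w)).takeWhile (· == D)).length

/-- Number of consecutive D's immediately before the first deepest step. -/
def runR (w : List Step) : ℕ :=
  ((w.take (firstDeep w - 1)).reverse.takeWhile (· == D)).length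

/-- The window map: replace W₁ = D^r w_k D^s by D^{r-1} E D^{s+1} if r ≥ 1,
and by D^s E if r = 0. -/
def phiWin (w : List Step) : List Step :=
  let k := firstDeep w - 1
  let r := runR w
  let s := runS w
  let seg : List Step :=
    if 1 ≤ r then List.replicate (r - 1) D ++ [E] ++ List.replicate (s + 1) D
    else List.replicate s D ++ [E]
  w.take (k - r) ++ seg ++ w.drop (k + s + 1)

/-- 0-based index of the first step after which the path is above the diagonal. -/
def firstAbove (w : List Step) : ℕ :=
  (List.range w.length).findIdx fun i =>
    decide ((w.take (i + 1)).count E < (w.take (i + 1)).count N)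

/-- The map ψ of Bonin–Shapiro–Simion: replace with E the last N of the maximal
run of consecutive N's beginning at the first step going above the diagonal. -/
def psi (w : List Step) : List Step :=
  let i := firstAbove w
  let j := i + ((w.drop i).takeWhile (· == N)).length - 1
  w.set j E


lemma qint_add (a b : ℕ) : qint (a + b) = qint a + X ^ a * qint b := by
  unfold qint
  rw [Finset.sum_range_add, Finset.mul_sum]
  congr 1
  exact Finset.sum_congr rfl fun i _ => by rw [pow_add]

lemma qint_succ (a : ℕ) : qint (a + 1) = 1 + X * qint a := by
  have := qint_add 1 a
  rw [add_comm a 1] at *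
  simpa [qint] using this

lemma qbinom_zero (m : ℕ) : qbinom m 0 = 1 := by cases m <;> rfl

lemma qbinom_succ (m k : ℕ) :
    qbinom (m + 1) (k + 1) = qbinom m k + X ^ (k + 1) * qbinom m (k + 1) := rfl

lemma qbinom_eq_zero : ∀ m k : ℕ, m < k → qbinom m k = 0 := by
  intro m
  induction m with
  | zero => intro k hk; cases k with
    | zero => omega
    | succ k => rfl
  | succ m ih =>
    intro k hk
    cases k with
    | zero => omega
    | succ k =>
      rw [qbinom_succ, ih k (by omega), ih (k+1) (by omega)]
      ring

lemma qbinom_self (m : ℕ) : qbinom m m = 1 := by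
  induction m with
  | zero => rfl
  | succ m ih => rw [qbinom_succ, ih, qbinom_eq_zero m (m+1) (by omega)]; ring

lemma qfact_succ (m : ℕ) : qfact (m + 1) = qfact m * qint (m + 1) := rfl

lemma qbinom_mul_fact : ∀ n a b : ℕ, a + b = n →
    qbinom n a * (qfact a * qfact b) = qfact n := by
  intro n
  induction n using Nat.strong_induction_on with
  | _ n ih =>
    intro a b hab
    cases a with
    | zero => subst hab; simp [qbinom_zero, qfact]
    | succ a =>
      cases b with
      | zero =>
        subst hab
        simp [qbinom_self, qfact]
      | succ b =>
        have hn : n = (a + b + 1) + 1 := by omega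
        subst hn
        have h1 := ih (a + b + 1) (by omega) a (b + 1) (by omega)
        have h2 := ih (a + b + 1) (by omega) (a + 1) b (by omega)
        have h3 : qint (a + 1 + (b + 1)) = qint (a + 1) + X ^ (a + 1) * qint (b + 1) :=
          qint_add (a + 1) (b + 1)
        rw [qbinom_succ, qfact_succ (a + b + 1), qfact_succ a, qfact_succ b]
        have e : a + b + 1 + 1 = a + 1 + (b + 1) := by omega
        rw [e, h3]
        rw [qfact_succ b] at h1
        rw [qfact_succ a] at h2
        linear_combination qint (a + 1) * h1 + X ^ (a + 1) * qint (b + 1) * h2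

lemma qint_ne_zero (m : ℕ) (hm : 0 < m) : qint m ≠ 0 := by
  intro h
  have := congrArg (Polynomial.eval 1) h
  simp [qint, Polynomial.eval_finset_sum] at this
  omega

lemma qfact_ne_zero (m : ℕ) : qfact m ≠ 0 := by
  induction m with
  | zero => simp [qfact]
  | succ m ih => exact mul_ne_zero ih (qint_ne_zero (m+1) (by omega))

lemma key_identity (m c : ℕ) :
    qint (m + 1) * (qbinom3 (2 * m + c) m m c -
        X * qbinom3 (2 * m + c) (m - 1) (m + 1) c) =
      qbinom (2 * m) m * qbinom (2 * m + c) c := by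
  cases m with
  | zero =>
    simp [qbinom3, qbinom_zero, qbinom_self, qint]
  | succ m' =>
    set m := m' + 1 with hm
    set L := 2 * m + c with hL
    have h30 : m + m + c = L := by omega
    have h31 : (m - 1) + (m + 1) + c = L := by omega
    have hLm : L - m = m + c := by omega
    have hLm1 : L - (m - 1) = m + c + 1 := by omega
    have hm1 : m - 1 = m' := by omega
    rw [qbinom3, qbinom3, if_pos h30, if_pos h31, hLm, hLm1, hm1]
    have F : qfact m * (qfact m * qfact c) ≠ 0 :=
      mul_ne_zero (qfact_ne_zero m) (mul_ne_zero (qfact_ne_zero m) (qfact_ne_zero c))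
    apply mul_right_cancel₀ F
    have h1 : qbinom L m * (qfact m * qfact (m + c)) = qfact L :=
      qbinom_mul_fact L m (m + c) (by omega)
    have h2 : qbinom (m + c) m * (qfact m * qfact c) = qfact (m + c) :=
      qbinom_mul_fact (m + c) m c rfl
    have h3 : qbinom L m' * (qfact m' * qfact (m + c + 1)) = qfact L :=
      qbinom_mul_fact L m' (m + c + 1) (by omega)
    have h4 : qbinom (m + c + 1) (m + 1) * (qfact (m + 1) * qfact c) = qfact (m + c + 1) :=
      qbinom_mul_fact (m + c + 1) (m + 1) c (by omega)
    have h5 : qbinom (2 * m) m * (qfact m * qfact m) = qfact (2 * m) :=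
      qbinom_mul_fact (2 * m) m m (by omega)
    have h6 : qbinom L c * (qfact c * qfact (2 * m)) = qfact L :=
      qbinom_mul_fact L c (2 * m) (by omega)
    have hf1 : qfact (m + 1) = qfact m * qint (m + 1) := qfact_succ m
    have hf2 : qfact m = qfact m' * qint m := qfact_succ m'
    have hf3 : qfact (m + c + 1) = qfact (m + c) * qint (m + c + 1) := qfact_succ (m + c)
    have hq : qint (m + 1) = 1 + X * qint m := qint_succ m
    -- composite facts
    have A1 : qbinom L m * qbinom (m + c) m * (qfact m * (qfact m * qfact c)) = qfact L := by
      linear_combination qbinom L m * qfact m * h2 + h1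
    have B4' : qint (m + 1) * qbinom (m + c + 1) (m + 1) * (qfact m * qfact c) =
        qfact (m + c + 1) := by
      linear_combination h4 - qbinom (m + c + 1) (m + 1) * qfact c * hf1
    have A2 : qint (m + 1) * (qbinom L m' * qbinom (m + c + 1) (m + 1)) *
        (qfact m * (qfact m * qfact c)) = qint m * qfact L := by
      linear_combination qbinom L m' * qfact m * B4' +
        qbinom L m' * qfact (m + c + 1) * hf2 + qint m * h3
    have A3 : qbinom (2 * m) m * qbinom L c * (qfact m * (qfact m * qfact c)) = qfact L := by
      linear_combination qbinom L c * qfact c * h5 + h6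
    linear_combination qint (m + 1) * A1 - X * A2 - A3 + qfact L * hq

/-- the q-multinomial identity
qbinom3(l; l-n, l-n, 2n-l) − q·qbinom3(l; l-n-1, l-n+1, 2n-l)
  = (1/[l-n+1]) · qbinom(2(l-n), l-n) · qbinom(l, 2n-l)
for n ≤ l ≤ 2n (stated with the denominator [l-n+1] cleared). -/
theorem q_multinomial_identity_EltN (n l : ℕ) (hnl : n ≤ l) (hl : l ≤ 2 * n) :
    qint (l - n + 1) *
        (qbinom3 l (l - n) (l - n) (2 * n - l) -
          X * qbinom3 l (l - n - 1) (l - n + 1) (2 * n - l)) =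
      qbinom (2 * (l - n)) (l - n) * qbinom l (2 * n - l) := by
  obtain ⟨m, rfl⟩ : ∃ m, l = n + m := ⟨l - n, by omega⟩
  obtain ⟨c, rfl⟩ : ∃ c, n = m + c := ⟨n - m, by omega⟩
  have e1 : m + c + m - (m + c) = m := by omega
  have e2 : 2 * (m + c) - (m + c + m) = c := by omega
  have e3 : m + c + m = 2 * m + c := by omega
  rw [e1, e2, e3]
  exact key_identity m c
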